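/- There exists a constant C > 0 such that the following holds for every n ≥ 2, every connected initial graph G₀ on n vertices, and every vertex u. Let T = ⌈C·n·ln n⌉. Then the probability (over the trajectory of the triangulation process started at G₀) of the event that both (i) for every round t < T, more than δ₀/4 vertices of N_t¹(u) are strongly tied to N_t²(u), and (ii) d_T(u) < (1 + 1/4)·δ₀, is at most 1/n². -/

import Mathlib

open scoped Classical

noncomputable section

variable {V : Type} [Fintype V] [DecidableEq V]

/-- The neighbors of `v` in `G`, as a `Finset`. -/
def nbr (G : SimpleGraph V) (v : V) : Finset V := Finset.univ.filter (fun w => G.Adj v w)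

/-- The degree `d(v)` of `v` in `G`. -/
def deg (G : SimpleGraph V) (v : V) : ℕ := (nbr G v).card

/-- The minimum degree of `G`. -/
def minDeg (G : SimpleGraph V) : ℕ := sInf (Set.range (deg G))

/-- `Nk G u i` is the set `Nⁱ(u)` of vertices at graph distance exactly `i` from `u`. -/
def Nk (G : SimpleGraph V) (u : V) (i : ℕ) : Finset V :=
  Finset.univ.filter (fun v => v ≠ u ∧ G.dist u v = i)

/-- `degIn G v S` is `d(v, S)`, the number of neighbors of `v` lying in `S`. -/
def degIn (G : SimpleGraph V) (v : V) (S : Finset V) : ℕ := (nbr G v ∩ S).card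

/-- The graph obtained from a choice function `c` in one round of the triangulation
process: every vertex `w` adds the edge joining the ordered pair `c w` of its chosen
neighbors (edges are unordered, loops are discarded, all additions are simultaneous). -/
def triNext (G : SimpleGraph V) (c : V → V × V) : SimpleGraph V :=
  G ⊔ SimpleGraph.fromEdgeSet {e | ∃ v : V, e = s((c v).1, (c v).2)}

/-- The probability that in one round of the triangulation process on the current
graph `G` the vertices make exactly the choices recorded by `c`: each vertex with at
least one neighbor independently picks an ordered pair of its neighbors uniformly at
random with replacement; isolated vertices are given the dummy choice `(v, v)`. -/
def triWeight (G : SimpleGraph V) (c : V → V × V) : ℝ :=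
  ∏ v : V,
    if deg G v = 0 then (if c v = (v, v) then 1 else 0)
    else if (c v).1 ∈ nbr G v ∧ (c v).2 ∈ nbr G v then (1 : ℝ) / (deg G v : ℝ) ^ 2 else 0

/-- Transition probability of one round of the triangulation process. -/
def triStep (G G' : SimpleGraph V) : ℝ :=
  ∑ c : V → V × V, if triNext G c = G' then triWeight G c else 0

/-- The graph obtained from a choice function `c` in one round of the two-hop walk
process: every vertex `u` adds the edge to the endpoint `(c u).2` of its two-hop walk
(loops are discarded, all additions are simultaneous). -/
def hopNext (G : SimpleGraph V) (c : V → V × V) : SimpleGraph V :=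
  G ⊔ SimpleGraph.fromEdgeSet {e | ∃ u : V, e = s(u, (c u).2)}

/-- The probability that in one round of the two-hop walk process on the current graph
`G` the vertices make exactly the choices recorded by `c`: each vertex `u` with at
least one neighbor independently picks a uniformly random neighbor `v = (c u).1` and
then a uniformly random neighbor `w = (c u).2` of `v`; isolated vertices are given the
dummy choice `(u, u)`. -/
def hopWeight (G : SimpleGraph V) (c : V → V × V) : ℝ :=
  ∏ u : V,
    if deg G u = 0 then (if c u = (u, u) then 1 else 0)
    else if (c u).1 ∈ nbr G u ∧ (c u).2 ∈ nbr G (c u).1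
      then (1 : ℝ) / ((deg G u : ℝ) * (deg G (c u).1 : ℝ)) else 0

/-- Transition probability of one round of the two-hop walk process. -/
def hopStep (G G' : SimpleGraph V) : ℝ :=
  ∑ c : V → V × V, if hopNext G c = G' then hopWeight G c else 0

/-- `trajProb step g0 T E` is the probability, for the Markov chain on a finite state
space `Γ` with one-step transition probabilities `step` started at `g0`, that the
trajectory `(g_0, g_1, …, g_T)` satisfies the event `E`; probabilities are realized as
a probability mass function on finite sequences of states.  (The trajectory is passed
to `E` as a function on `ℕ`, frozen at time `T`.) -/
def trajProb {Γ : Type} [Fintype Γ] (step : Γ → Γ → ℝ) (g0 : Γ) (T : ℕ)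
    (E : (ℕ → Γ) → Prop) : ℝ :=
  ∑ s : Fin (T + 1) → Γ,
    if s 0 = g0 ∧ E (fun t => s ⟨min t T, Nat.lt_succ_of_le (Nat.min_le_right t T)⟩)
    then ∏ t : Fin T, step (s t.castSucc) (s t.succ) else 0

end

section Chain
variable {Γ : Type} [Fintype Γ]

lemma chain_bound (step : Γ → Γ → ℝ) (hnn : ∀ x y, 0 ≤ step x y) :
    ∀ (T : ℕ) (P : ℕ → Γ → Γ → Prop) (r : ℕ → ℝ), (∀ t, 0 ≤ r t) →
      (∀ t, t < T → ∀ x : Γ, (∑ y : Γ, if P t x y then step x y else 0) ≤ r t) →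
      ∀ g0 : Γ,
    (∑ s : Fin (T + 1) → Γ,
        if s 0 = g0 ∧ (∀ t : Fin T, P t.val (s t.castSucc) (s t.succ))
        then ∏ t : Fin T, step (s t.castSucc) (s t.succ) else 0)
      ≤ ∏ t ∈ Finset.range T, r t := by
  intro T
  induction T with
  | zero =>
    intro P r hr hstep g0
    rw [← Equiv.sum_comp (Equiv.funUnique (Fin 1) Γ).symm]
    simp
  | succ T ih =>
    intro P r hr hstep g0
    rw [← Equiv.sum_comp (Fin.consEquiv (fun _ : Fin (T + 2) => Γ))]
    have hre : (∑ p : Γ × (Fin (T+1) → Γ),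
        if (Fin.consEquiv (fun _ : Fin (T + 2) => Γ)) p 0 = g0 ∧
            (∀ t : Fin (T+1), P t.val ((Fin.consEquiv (fun _ : Fin (T + 2) => Γ)) p t.castSucc)
              ((Fin.consEquiv (fun _ : Fin (T + 2) => Γ)) p t.succ))
        then ∏ t : Fin (T+1), step ((Fin.consEquiv (fun _ : Fin (T + 2) => Γ)) p t.castSucc)
            ((Fin.consEquiv (fun _ : Fin (T + 2) => Γ)) p t.succ) else 0)
      = ∑ x : Γ, ∑ s' : Fin (T+1) → Γ,
        if x = g0 ∧ P 0 x (s' 0) ∧ (∀ t : Fin T, P (t.val+1) (s' t.castSucc) (s' t.succ))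
        then step x (s' 0) * ∏ t : Fin T, step (s' t.castSucc) (s' t.succ) else 0 := by
      rw [Fintype.sum_prod_type]
      refine Finset.sum_congr rfl fun x _ => Finset.sum_congr rfl fun s' _ => ?_
      congr 1
      · simp [Fin.consEquiv, Fin.forall_fin_succ, ← Fin.succ_castSucc]
      · rw [Fin.prod_univ_succ]
        simp [Fin.consEquiv, ← Fin.succ_castSucc]
    rw [hre]
    rw [Finset.sum_eq_single_of_mem g0 (Finset.mem_univ g0) (by
      intro x _ hx
      refine Finset.sum_eq_zero fun s' _ => ?_
      rw [if_neg]; rintro ⟨h, -⟩; exact hx h)]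
    -- fiber decomposition over s' 0
    have hfib : (∑ s' : Fin (T+1) → Γ,
        if g0 = g0 ∧ P 0 g0 (s' 0) ∧ (∀ t : Fin T, P (t.val+1) (s' t.castSucc) (s' t.succ))
        then step g0 (s' 0) * ∏ t : Fin T, step (s' t.castSucc) (s' t.succ) else 0)
      = ∑ y : Γ, (if P 0 g0 y then step g0 y else 0) *
          ∑ s' : Fin (T+1) → Γ,
            (if s' 0 = y ∧ (∀ t : Fin T, P (t.val+1) (s' t.castSucc) (s' t.succ))
             then ∏ t : Fin T, step (s' t.castSucc) (s' t.succ) else 0) := by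
      have : ∀ s' : Fin (T+1) → Γ,
          (if g0 = g0 ∧ P 0 g0 (s' 0) ∧ (∀ t : Fin T, P (t.val+1) (s' t.castSucc) (s' t.succ))
           then step g0 (s' 0) * ∏ t : Fin T, step (s' t.castSucc) (s' t.succ) else 0)
        = ∑ y : Γ, (if P 0 g0 y then step g0 y else 0) *
            (if s' 0 = y ∧ (∀ t : Fin T, P (t.val+1) (s' t.castSucc) (s' t.succ))
             then ∏ t : Fin T, step (s' t.castSucc) (s' t.succ) else 0) := by
        intro s'
        rw [Finset.sum_eq_single_of_mem (s' 0) (Finset.mem_univ _) (by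
          intro y _ hy
          have hne : ¬(s' 0 = y ∧ (∀ t : Fin T, P (t.val+1) (s' t.castSucc) (s' t.succ))) :=
            fun h => hy h.1.symm
          rw [if_neg hne, mul_zero])]
        by_cases h1 : P 0 g0 (s' 0) <;>
          by_cases h2 : (∀ t : Fin T, P (t.val+1) (s' t.castSucc) (s' t.succ)) <;>
          simp [h1, h2]
      rw [Finset.sum_congr rfl fun s' _ => this s', Finset.sum_comm]
      exact Finset.sum_congr rfl fun y _ => (Finset.mul_sum _ _ _).symm
    rw [hfib]
    have hR : (0:ℝ) ≤ ∏ t ∈ Finset.range T, r (t+1) :=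
      Finset.prod_nonneg fun i _ => hr _
    calc ∑ y : Γ, (if P 0 g0 y then step g0 y else 0) *
          ∑ s' : Fin (T+1) → Γ,
            (if s' 0 = y ∧ (∀ t : Fin T, P (t.val+1) (s' t.castSucc) (s' t.succ))
             then ∏ t : Fin T, step (s' t.castSucc) (s' t.succ) else 0)
        ≤ ∑ y : Γ, (if P 0 g0 y then step g0 y else 0) * ∏ t ∈ Finset.range T, r (t+1) := by
          refine Finset.sum_le_sum fun y _ => ?_
          refine mul_le_mul_of_nonneg_left ?_ (by split_ifs with h; exacts [hnn _ _, le_refl 0])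
          exact ih (fun i => P (i+1)) (fun i => r (i+1)) (fun i => hr _)
            (fun t ht x => hstep (t+1) (by omega) x) y
      _ = (∑ y : Γ, if P 0 g0 y then step g0 y else 0) * ∏ t ∈ Finset.range T, r (t+1) :=
          (Finset.sum_mul _ _ _).symm
      _ ≤ r 0 * ∏ t ∈ Finset.range T, r (t+1) :=
          mul_le_mul_of_nonneg_right (hstep 0 (by omega) g0) hR
      _ = ∏ t ∈ Finset.range (T+1), r t := by
          rw [Finset.prod_range_succ']
          ring
end Chain

set_option linter.unusedSectionVars false
noncomputable section AuxGraph
open Finset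
variable {V : Type} [Fintype V] [DecidableEq V]

/-- per-vertex factor of `triWeight`. -/
def wfac (G : SimpleGraph V) (v : V) (p : V × V) : ℝ :=
  if deg G v = 0 then (if p = (v, v) then 1 else 0)
  else if p.1 ∈ nbr G v ∧ p.2 ∈ nbr G v then (1 : ℝ) / (deg G v : ℝ) ^ 2 else 0

lemma triWeight_eq_prod (G : SimpleGraph V) (c : V → V × V) :
    triWeight G c = ∏ v : V, wfac G v (c v) := rfl

lemma wfac_nonneg (G : SimpleGraph V) (v : V) (p : V × V) : 0 ≤ wfac G v p := by
  unfold wfac; split_ifs <;> positivity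

lemma sum_wfac (G : SimpleGraph V) (v : V) : ∑ p : V × V, wfac G v p = 1 := by
  unfold wfac
  by_cases h : deg G v = 0
  · simp [h]
  · simp only [h, if_false]
    have : ∀ p : V × V, (if p.1 ∈ nbr G v ∧ p.2 ∈ nbr G v then (1 : ℝ) / (deg G v : ℝ) ^ 2 else 0)
        = (if p ∈ nbr G v ×ˢ nbr G v then (1 : ℝ) / (deg G v : ℝ) ^ 2 else 0) := by
      intro p; simp [Finset.mem_product]
    rw [Finset.sum_congr rfl fun p _ => this p, Finset.sum_ite_mem, Finset.univ_inter,
      Finset.sum_const, Finset.card_product]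
    have hd : ((deg G v : ℝ)) ≠ 0 := Nat.cast_ne_zero.mpr h
    rw [deg, nsmul_eq_mul]
    push_cast
    have hd' : ((#(nbr G v) : ℝ)) ≠ 0 := by exact_mod_cast h
    field_simp

lemma triWeight_nonneg (G : SimpleGraph V) (c : V → V × V) : 0 ≤ triWeight G c := by
  rw [triWeight_eq_prod]; exact Finset.prod_nonneg fun v _ => wfac_nonneg G v _

lemma triStep_nonneg (G G' : SimpleGraph V) : 0 ≤ triStep G G' := by
  refine Finset.sum_nonneg fun c _ => ?_
  split_ifs
  · exact triWeight_nonneg G c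
  · exact le_refl 0

lemma sum_triWeight (G : SimpleGraph V) : ∑ c : V → V × V, triWeight G c = 1 := by
  have : ∀ c : V → V × V, triWeight G c = ∏ v : V, wfac G v (c v) := triWeight_eq_prod G
  rw [Finset.sum_congr rfl fun c _ => this c, ← Fintype.prod_sum]
  rw [Finset.prod_congr rfl fun v _ => sum_wfac G v]
  exact Finset.prod_const_one

lemma sum_triStep (G : SimpleGraph V) : ∑ G' : SimpleGraph V, triStep G G' = 1 := by
  unfold triStep
  rw [Finset.sum_comm]
  rw [Finset.sum_congr rfl fun c _ => Finset.sum_ite_eq Finset.univ (triNext G c)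
    (fun _ => triWeight G c)]
  simp [sum_triWeight G]

lemma le_of_triStep_ne_zero {G G' : SimpleGraph V} (h : triStep G G' ≠ 0) : G ≤ G' := by
  by_contra hle
  apply h
  refine Finset.sum_eq_zero fun c _ => ?_
  rw [if_neg]
  intro hc
  exact hle (hc ▸ (le_sup_left : G ≤ triNext G c))

lemma deg_mono {G G' : SimpleGraph V} (h : G ≤ G') (u : V) : deg G u ≤ deg G' u := by
  apply Finset.card_le_card
  intro w hw
  simp only [nbr, Finset.mem_filter, Finset.mem_univ, true_and] at hw ⊢
  exact h hw

lemma adj_of_mem_Nk1 {G : SimpleGraph V} {u v : V} (h : v ∈ Nk G u 1) : G.Adj u v := by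
  simp only [Nk, Finset.mem_filter] at h
  exact SimpleGraph.dist_eq_one_iff_adj.mp h.2.2

lemma not_closed_of_mem_Nk2 {G : SimpleGraph V} {u w : V} (h : w ∈ Nk G u 2) :
    w ∉ insert u (nbr G u) := by
  simp only [Nk, Finset.mem_filter] at h
  intro hmem
  rcases Finset.mem_insert.mp hmem with h1 | h2
  · exact h.2.1 h1
  · have : G.Adj u w := by
      simpa [nbr] using h2
    have := SimpleGraph.dist_eq_one_iff_adj.mpr this
    omega

lemma one_round (n δ : ℕ) (hcard : Fintype.card V = n) (hδ1 : 1 ≤ δ) (hδn : δ ≤ n)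
    (G : SimpleGraph V) (u : V)
    (hS : (δ : ℝ) / 4 <
      (((Nk G u 1).filter (fun v => (δ : ℝ) / 2 ≤ (degIn G v (Nk G u 2) : ℝ))).card : ℝ))
    (hu : (deg G u : ℝ) < (1 + 1/4) * (δ : ℝ)) :
    (∑ G' : SimpleGraph V, if deg G' u ≤ deg G u then triStep G G' else 0)
      ≤ ((1 : ℝ) - 1 / (9 * n)) ^ (δ / 4 + 1) := by
  classical
  set S : Finset V := (Nk G u 1).filter (fun v => (δ : ℝ) / 2 ≤ (degIn G v (Nk G u 2) : ℝ))
    with hSdef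
  set B : Finset V := insert u (nbr G u) with hBdef
  set W : V → Finset V := fun v => nbr G v \ B with hWdef
  set Good : V → Finset (V × V) := fun v => ({u} ×ˢ W v) ∪ (W v ×ˢ {u}) with hGooddef
  set ρ : ℝ := (1 : ℝ) - 1 / (9 * n) with hρdef
  have hn1 : 1 ≤ n := le_trans hδ1 hδn
  have hρ0 : 0 ≤ ρ := by
    rw [hρdef, sub_nonneg]
    rw [div_le_one (by positivity)]
    have : (1:ℝ) ≤ (n:ℝ) := by exact_mod_cast hn1
    nlinarith
  have hρ1 : ρ ≤ 1 := by
    rw [hρdef]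
    have : 0 ≤ 1 / (9 * (n:ℝ)) := by positivity
    linarith
  -- k ≤ S.card
  have hkS : δ / 4 + 1 ≤ S.card := by
    have : (δ : ℝ) < 4 * S.card := by linarith
    have : δ < 4 * S.card := by exact_mod_cast this
    omega
  -- basic facts about members of S
  have hadj : ∀ v ∈ S, G.Adj v u := by
    intro v hv
    exact (adj_of_mem_Nk1 (Finset.mem_filter.mp hv).1).symm
  have hdegpos : ∀ v ∈ S, deg G v ≠ 0 := by
    intro v hv
    have h1 : u ∈ nbr G v := by simpa [nbr] using hadj v hv
    have h2 : 0 < deg G v := by rw [deg]; exact Finset.card_pos.mpr ⟨u, h1⟩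
    omega
  -- good picks are in nbr v ×ˢ nbr v
  have hGoodsub : ∀ v ∈ S, Good v ⊆ nbr G v ×ˢ nbr G v := by
    intro v hv p hp
    have hu' : u ∈ nbr G v := by simpa [nbr] using hadj v hv
    rw [hGooddef] at hp
    rcases Finset.mem_union.mp hp with h | h <;>
      rw [Finset.mem_product] at h <;> rw [Finset.mem_product] <;>
      simp only [Finset.mem_singleton] at h
    · exact ⟨h.1 ▸ hu', (Finset.mem_sdiff.mp h.2).1⟩
    · exact ⟨(Finset.mem_sdiff.mp h.1).1, h.2 ▸ hu'⟩
  -- a good pick forces degree gain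
  have hgain : ∀ (c : V → V × V) (v : V), v ∈ S → c v ∈ Good v →
      ¬ (deg (triNext G c) u ≤ deg G u) := by
    intro c v hv hcv
    -- extract w
    have : ∃ w ∈ W v, s((c v).1, (c v).2) = s(u, w) := by
      rw [hGooddef] at hcv
      rcases Finset.mem_union.mp hcv with h | h <;> rw [Finset.mem_product] at h <;>
        simp only [Finset.mem_singleton] at h
      · exact ⟨(c v).2, h.2, by rw [h.1]⟩
      · exact ⟨(c v).1, h.1, by rw [h.2, Sym2.eq_swap]⟩
    obtain ⟨w, hwW, hsym⟩ := this
    have hwB := Finset.mem_sdiff.mp hwW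
    have hwu : w ≠ u := fun h => hwB.2 (h ▸ Finset.mem_insert_self u _)
    have hwnbr : w ∉ nbr G u := fun h => hwB.2 (Finset.mem_insert_of_mem h)
    have hadjnew : (triNext G c).Adj u w := by
      refine Or.inr ?_
      rw [SimpleGraph.fromEdgeSet_adj]
      exact ⟨⟨v, hsym.symm⟩, hwu.symm⟩
    have hsub : insert w (nbr G u) ⊆ nbr (triNext G c) u := by
      intro x hx
      rcases Finset.mem_insert.mp hx with h | h
      · subst h; simpa [nbr] using hadjnew
      · have : G.Adj u x := by simpa [nbr] using h
        have : (triNext G c).Adj u x := (le_sup_left : G ≤ triNext G c) this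
        simpa [nbr] using this
    intro hle
    have h1 : deg G u + 1 ≤ deg (triNext G c) u := by
      have := Finset.card_le_card hsub
      rwa [Finset.card_insert_of_notMem hwnbr] at this
    omega
  -- the weight of good picks
  have hGoodcard : ∀ v ∈ S, (Good v).card = 2 * (W v).card := by
    intro v hv
    rw [hGooddef]
    have hdisj : Disjoint ({u} ×ˢ W v) ((W v) ×ˢ {u}) := by
      rw [Finset.disjoint_left]
      intro p hp1 hp2
      rw [Finset.mem_product] at hp1 hp2
      simp only [Finset.mem_singleton] at hp1 hp2
      have : u ∈ W v := hp2.2 ▸ hp1.2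
      exact (Finset.mem_sdiff.mp this).2 (Finset.mem_insert_self u _)
    rw [Finset.card_union_of_disjoint hdisj, Finset.card_product, Finset.card_product]
    simp [two_mul]
  -- arithmetic: per vertex bound
  have harith : ∀ v ∈ S, 1 / (9 * (n:ℝ)) ≤ 2 * ((W v).card : ℝ) / ((deg G v : ℝ))^2 := by
    intro v hv
    set d : ℕ := deg G v with hd
    set m : ℕ := (W v).card with hm
    have hd1 : 1 ≤ d := Nat.one_le_iff_ne_zero.mpr (hdegpos v hv)
    have hdn : d ≤ n := by
      rw [hd, deg, ← hcard]; exact Finset.card_le_univ _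
    have hm1 : (δ : ℝ) / 2 ≤ (m : ℝ) := by
      have hsub : nbr G v ∩ Nk G u 2 ⊆ W v := by
        intro w hw
        rw [Finset.mem_inter] at hw
        rw [hWdef]
        exact Finset.mem_sdiff.mpr ⟨hw.1, not_closed_of_mem_Nk2 hw.2⟩
      have hcle : degIn G v (Nk G u 2) ≤ m := Finset.card_le_card hsub
      have := (Finset.mem_filter.mp hv).2
      calc (δ : ℝ) / 2 ≤ (degIn G v (Nk G u 2) : ℝ) := this
        _ ≤ (m : ℝ) := by exact_mod_cast hcle
    have hm2 : (d : ℝ) ≤ (m : ℝ) + 1 + (deg G u : ℝ) := by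
      have hd0 : d = (nbr G v).card := rfl
      have hm0 : m = (nbr G v \ B).card := rfl
      have h1 : (nbr G v).card ≤ (nbr G v \ B).card + B.card :=
        Finset.card_le_card_sdiff_add_card
      have h2 : B.card ≤ 1 + deg G u := by
        rw [hBdef]
        calc (insert u (nbr G u)).card ≤ (nbr G u).card + 1 := Finset.card_insert_le _ _
          _ = 1 + deg G u := by rw [deg]; ring
      have h3 : d ≤ m + 1 + deg G u := by omega
      exact_mod_cast h3
    -- now pure real arithmetic
    have hdR : (1:ℝ) ≤ (d:ℝ) := by exact_mod_cast hd1
    have hdnR : (d:ℝ) ≤ (n:ℝ) := by exact_mod_cast hdn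
    have hδR : (1:ℝ) ≤ (δ:ℝ) := by exact_mod_cast hδ1
    have hδnR : (δ:ℝ) ≤ (n:ℝ) := by exact_mod_cast hδn
    rw [div_le_div_iff₀ (by positivity) (by positivity)]
    rcases le_or_gt (d : ℝ) (9 * δ) with hcase | hcase
    · nlinarith
    · nlinarith
  -- define the per-vertex damped factor
  set f : V → V × V → ℝ := fun v p => if v ∈ S ∧ p ∈ Good v then 0 else wfac G v p
    with hfdef
  have hf_nonneg : ∀ v p, 0 ≤ f v p := by
    intro v p
    rw [hfdef]
    dsimp only
    split_ifs
    · exact le_refl 0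
    · exact wfac_nonneg G v p
  have hsumf_nonneg : ∀ v, 0 ≤ ∑ p : V × V, f v p :=
    fun v => Finset.sum_nonneg fun p _ => hf_nonneg v p
  have hsumf_notS : ∀ v ∉ S, ∑ p : V × V, f v p = 1 := by
    intro v hv
    rw [← sum_wfac G v]
    refine Finset.sum_congr rfl fun p _ => ?_
    rw [hfdef]
    simp [hv]
  have hsumf_S : ∀ v ∈ S, ∑ p : V × V, f v p ≤ ρ := by
    intro v hv
    have heval : ∀ p ∈ Good v, wfac G v p = 1 / ((deg G v : ℝ))^2 := by
      intro p hp
      have := hGoodsub v hv hp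
      rw [Finset.mem_product] at this
      rw [wfac, if_neg (hdegpos v hv), if_pos this]
    have hsplit : ∀ p : V × V, f v p = wfac G v p - (if p ∈ Good v then wfac G v p else 0) := by
      intro p
      rw [hfdef]
      dsimp only
      by_cases hp : p ∈ Good v
      · simp [hp, hv]
      · simp [hp, hv]
    rw [Finset.sum_congr rfl fun p _ => hsplit p, Finset.sum_sub_distrib, sum_wfac G v]
    rw [Finset.sum_ite_mem, Finset.univ_inter]
    rw [Finset.sum_congr rfl heval, Finset.sum_const, hGoodcard v hv]
    rw [hρdef, nsmul_eq_mul]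
    have h1 := harith v hv
    have h2 : 2 * (((W v).card : ℝ)) / ((deg G v : ℝ))^2
        = 2 * (((W v).card : ℝ)) * (1 / ((deg G v : ℝ))^2) := by ring
    push_cast
    push_cast at h1 h2
    linarith
  -- main computation
  have hmain1 : (∑ G' : SimpleGraph V, if deg G' u ≤ deg G u then triStep G G' else 0)
      = ∑ c : V → V × V, if deg (triNext G c) u ≤ deg G u then triWeight G c else 0 := by
    unfold triStep
    have : ∀ G' : SimpleGraph V,
        (if deg G' u ≤ deg G u then ∑ c : V → V × V, if triNext G c = G' then triWeight G c else 0 else 0)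
        = ∑ c : V → V × V, if deg G' u ≤ deg G u then (if triNext G c = G' then triWeight G c else 0) else 0 := by
      intro G'
      split_ifs with h
      · rfl
      · simp
    rw [Finset.sum_congr rfl fun G' _ => this G', Finset.sum_comm]
    refine Finset.sum_congr rfl fun c _ => ?_
    rw [Finset.sum_eq_single_of_mem (triNext G c) (Finset.mem_univ _) ?_]
    · simp
    · intro G' _ hne
      split_ifs with h1 h2
      · exact absurd h2.symm hne
      · rfl
      · rfl
  have hmain2 : (∑ c : V → V × V, if deg (triNext G c) u ≤ deg G u then triWeight G c else 0)
      ≤ ∑ c : V → V × V, ∏ v : V, f v (c v) := by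
    refine Finset.sum_le_sum fun c _ => ?_
    by_cases hgood : ∃ v ∈ S, c v ∈ Good v
    · obtain ⟨v0, hv0, hcv0⟩ := hgood
      rw [if_neg (hgain c v0 hv0 hcv0)]
      exact Finset.prod_nonneg fun v _ => hf_nonneg v _
    · push_neg at hgood
      have : ∀ v : V, f v (c v) = wfac G v (c v) := by
        intro v
        rw [hfdef]
        dsimp only
        by_cases hv : v ∈ S
        · rw [if_neg]; rintro ⟨h1, h2⟩; exact hgood v hv h2
        · rw [if_neg]; rintro ⟨h1, h2⟩; exact hv h1
      rw [Finset.prod_congr rfl fun v _ => this v, ← triWeight_eq_prod]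
      split_ifs
      · exact le_refl _
      · exact triWeight_nonneg G c
  have hmain3 : (∑ c : V → V × V, ∏ v : V, f v (c v)) = ∏ v : V, ∑ p : V × V, f v p :=
    (Fintype.prod_sum f).symm
  have hmain4 : (∏ v : V, ∑ p : V × V, f v p) ≤ ρ ^ (δ / 4 + 1) := by
    have hle : (∏ v : V, ∑ p : V × V, f v p) ≤ ∏ v : V, (if v ∈ S then ρ else 1) := by
      refine Finset.prod_le_prod (fun v _ => hsumf_nonneg v) fun v _ => ?_
      split_ifs with hv
      · exact hsumf_S v hv
      · exact le_of_eq (hsumf_notS v hv)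
    have heq : (∏ v : V, (if v ∈ S then ρ else 1)) = ρ ^ S.card := by
      rw [← Finset.prod_filter_mul_prod_filter_not Finset.univ (· ∈ S)]
      have h1 : ∀ x ∈ Finset.univ.filter (· ∈ S), (if x ∈ S then ρ else 1) = ρ := by
        intro x hx
        simp only [Finset.mem_filter] at hx
        simp [hx.2]
      have h2 : ∀ x ∈ Finset.univ.filter (fun v => ¬ v ∈ S), (if x ∈ S then ρ else 1) = 1 := by
        intro x hx
        simp only [Finset.mem_filter] at hx
        simp [hx.2]
      rw [Finset.prod_congr rfl h1, Finset.prod_congr rfl h2, Finset.prod_const,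
        Finset.prod_const, one_pow, mul_one]
      have h3 : Finset.univ.filter (· ∈ S) = S := by ext x; simp
      rw [h3]
    calc (∏ v : V, ∑ p : V × V, f v p) ≤ ρ ^ S.card := by rw [← heq]; exact hle
      _ ≤ ρ ^ (δ / 4 + 1) := pow_le_pow_of_le_one hρ0 hρ1 hkS
  calc (∑ G' : SimpleGraph V, if deg G' u ≤ deg G u then triStep G G' else 0)
      = _ := hmain1
    _ ≤ _ := hmain2
    _ = _ := hmain3
    _ ≤ ρ ^ (δ / 4 + 1) := hmain4

lemma minDeg_le_deg (G : SimpleGraph V) (u : V) : minDeg G ≤ deg G u :=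
  Nat.sInf_le ⟨u, rfl⟩

lemma one_le_minDeg {G : SimpleGraph V} (hc : G.Connected) (h2 : 2 ≤ Fintype.card V) :
    1 ≤ minDeg G := by
  have hdeg : ∀ v : V, 1 ≤ deg G v := by
    intro v
    obtain ⟨w, hw⟩ := Fintype.exists_ne_of_one_lt_card (by omega) v
    obtain ⟨p⟩ := hc.preconnected v w
    cases p with
    | nil => exact absurd rfl hw
    | @cons _ b _ h q =>
      have hb : b ∈ nbr G v := by simpa [nbr] using h
      have : 0 < deg G v := by rw [deg]; exact Finset.card_pos.mpr ⟨b, hb⟩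
      omega
  have hne : (Set.range (deg G)).Nonempty := by
    have : Nonempty V := Fintype.card_pos_iff.mp (by omega)
    obtain ⟨v⟩ := this
    exact ⟨deg G v, v, rfl⟩
  obtain ⟨v0, hv0⟩ := Nat.sInf_mem hne
  rw [minDeg, ← hv0]
  exact hdeg v0

lemma deg_le_card (G : SimpleGraph V) (u : V) : deg G u ≤ Fintype.card V := by
  rw [deg]; exact Finset.card_le_univ _

end AuxGraph

set_option maxHeartbeats 1600000 in
/-- There is a constant `C > 0` such that for every `n ≥ 2`, every
connected initial graph `G₀` on `n` vertices with minimum degree `δ₀`, and every vertex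
`u`, with `T = ⌈C·n·ln n⌉`: the probability, over the trajectory of the triangulation
process started at `G₀`, that both (i) for every round `t < T` more than `δ₀/4`
vertices of `N_t¹(u)` are strongly tied to `N_t²(u)` (i.e. have at least `δ₀/2`
neighbors there), and (ii) `d_T(u) < (1 + 1/4)·δ₀`, is at most `1/n²`. -/
theorem triangulation_many_strongly_tied :
    ∃ C : ℝ, 0 < C ∧
      ∀ (V : Type) [Fintype V] [DecidableEq V] (n : ℕ), 2 ≤ n → Fintype.card V = n →
        ∀ (G0 : SimpleGraph V), G0.Connected → ∀ u : V,
          ∀ T : ℕ, T = ⌈C * n * Real.log n⌉₊ →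
            trajProb triStep G0 T (fun g =>
              (∀ t < T, (minDeg G0 : ℝ) / 4 <
                  (((Nk (g t) u 1).filter (fun v =>
                    (minDeg G0 : ℝ) / 2 ≤ (degIn (g t) v (Nk (g t) u 2) : ℝ))).card : ℝ))
              ∧ (deg (g T) u : ℝ) < (1 + 1/4) * (minDeg G0 : ℝ))
            ≤ 1 / (n : ℝ) ^ 2 := by
  classical
  refine ⟨100, by norm_num, ?_⟩
  intro V _ _ n hn hcard G0 hconn u T hT
  set δ := minDeg G0 with hδdef
  set k := δ / 4 + 1 with hkdef
  set L := T / k with hLdef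
  set ρ : ℝ := 1 - 1 / (9 * (n : ℝ)) with hρdef
  -- numeric groundwork
  have hnR : (2:ℝ) ≤ (n:ℝ) := by exact_mod_cast hn
  have hn0 : (0:ℝ) < n := by linarith
  have hlog2 : (0.6931471803 : ℝ) < Real.log 2 := Real.log_two_gt_d9
  have hlogn : Real.log 2 ≤ Real.log n := Real.log_le_log (by norm_num) hnR
  have hlognpos : (0:ℝ) < Real.log n := by linarith
  have hTreal : (100:ℝ) * n * Real.log n ≤ (T:ℝ) := by
    rw [hT]; exact Nat.le_ceil _
  have hδ1 : 1 ≤ δ := one_le_minDeg hconn (by omega)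
  have hδn : δ ≤ n := le_trans (minDeg_le_deg G0 u) (hcard ▸ deg_le_card G0 u)
  have hk1 : 1 ≤ k := by omega
  have hkn : k ≤ n := by omega
  have hTn : n ≤ T := by
    have h1 : (n:ℝ) ≤ (T:ℝ) := by nlinarith
    exact_mod_cast h1
  have hTk : k ≤ T := le_trans hkn hTn
  have hL1 : 1 ≤ L := (Nat.one_le_div_iff (by omega)).mpr hTk
  have hkL : k * L ≤ T := by rw [hLdef, mul_comm]; exact Nat.div_mul_le_self T k
  have hkLlow : T < k * L + k := by
    rw [hLdef, mul_comm (k) (T/k)]; exact Nat.lt_div_mul_add (by omega)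
  have hρ0 : 0 ≤ ρ := by
    rw [hρdef, sub_nonneg, div_le_one (by positivity)]; linarith
  have hρ1 : ρ ≤ 1 := by
    have : (0:ℝ) ≤ 1 / (9 * (n:ℝ)) := by positivity
    rw [hρdef]; linarith
  -- state-property and per-block transition predicate
  set A : SimpleGraph V → Prop := fun x =>
    ((δ:ℝ)/4 < (((Nk x u 1).filter (fun v =>
        (δ:ℝ)/2 ≤ (degIn x v (Nk x u 2) : ℝ))).card : ℝ))
    ∧ (deg x u : ℝ) < (1 + 1/4) * (δ : ℝ) with hAdef
  set P : ℕ → ℕ → SimpleGraph V → SimpleGraph V → Prop := fun b t x y =>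
    (b*L ≤ t ∧ t < b*L + L) → (A x ∧ deg y u ≤ deg x u) with hPdef
  -- per-block chain sums
  set chainSum : ℕ → ℝ := fun b =>
    ∑ s : Fin (T + 1) → SimpleGraph V,
      if s 0 = G0 ∧ (∀ t : Fin T, P b t.val (s t.castSucc) (s t.succ))
      then ∏ t : Fin T, triStep (s t.castSucc) (s t.succ) else 0 with hchainSumdef
  -- Step A: pointwise domination of the trajectory event by the block events
  have hpoint : trajProb triStep G0 T (fun g =>
      (∀ t < T, (δ : ℝ) / 4 <
          (((Nk (g t) u 1).filter (fun v =>
            (δ : ℝ) / 2 ≤ (degIn (g t) v (Nk (g t) u 2) : ℝ))).card : ℝ))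
      ∧ (deg (g T) u : ℝ) < (1 + 1/4) * (δ : ℝ))
      ≤ ∑ b ∈ Finset.range k, chainSum b := by
    rw [trajProb]
    rw [Finset.sum_comm]
    refine Finset.sum_le_sum fun s _ => ?_
    set g : ℕ → SimpleGraph V :=
      fun t => s ⟨min t T, Nat.lt_succ_of_le (Nat.min_le_right t T)⟩ with hgdef
    have hRHS_nonneg : ∀ b ∈ Finset.range k,
        0 ≤ (if s 0 = G0 ∧ (∀ t : Fin T, P b t.val (s t.castSucc) (s t.succ))
          then ∏ t : Fin T, triStep (s t.castSucc) (s t.succ) else 0) := by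
      intro b _
      split_ifs
      · exact Finset.prod_nonneg fun t _ => triStep_nonneg _ _
      · exact le_refl 0
    by_cases hE : s 0 = G0 ∧ ((∀ t < T, (δ : ℝ) / 4 <
          (((Nk (g t) u 1).filter (fun v =>
            (δ : ℝ) / 2 ≤ (degIn (g t) v (Nk (g t) u 2) : ℝ))).card : ℝ))
        ∧ (deg (g T) u : ℝ) < (1 + 1/4) * (δ : ℝ))
    case neg =>
      rw [if_neg hE]
      exact Finset.sum_nonneg hRHS_nonneg
    case pos =>
      rw [if_pos hE]
      by_cases hzero : (∏ t : Fin T, triStep (s t.castSucc) (s t.succ)) = 0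
      · exact le_trans (le_of_eq hzero) (Finset.sum_nonneg hRHS_nonneg)
      · have hfac : ∀ t : Fin T, triStep (s t.castSucc) (s t.succ) ≠ 0 := by
          intro t
          exact Finset.prod_ne_zero_iff.mp hzero t (Finset.mem_univ t)
        have hgt : ∀ (t : ℕ) (h : t ≤ T), g t = s ⟨t, Nat.lt_succ_of_le h⟩ := by
          intro t h
          rw [hgdef]
          exact congrArg s (Fin.ext (Nat.min_eq_left h))
        have hstep_le : ∀ t, t < T → g t ≤ g (t+1) := by
          intro t ht
          have h1 := hfac ⟨t, ht⟩
          have hc1 : (⟨t, ht⟩ : Fin T).castSucc = ⟨t, by omega⟩ := Fin.ext rfl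
          have hc2 : (⟨t, ht⟩ : Fin T).succ = ⟨t+1, by omega⟩ := Fin.ext rfl
          rw [hc1, hc2] at h1
          rw [hgt t (by omega), hgt (t+1) (by omega)]
          exact le_of_triStep_ne_zero h1
        have hdegmono : ∀ i j, i ≤ j → j ≤ T → deg (g i) u ≤ deg (g j) u := by
          intro i j hij hj
          have haux : ∀ m (j' : ℕ), j' = i + m → j' ≤ T → deg (g i) u ≤ deg (g j') u := by
            intro m
            induction m with
            | zero => intro j' hj' _; subst hj'; simp
            | succ m ih =>
              intro j' hj' hj'T
              subst hj'
              have h1 := ih (i + m) rfl (by omega)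
              have h2 := deg_mono (hstep_le (i + m) (by omega)) u
              rw [show i + (m+1) = (i+m) + 1 by omega]
              omega
          exact haux (j - i) j (by omega) hj
        set Gset : Finset ℕ :=
          (Finset.range T).filter (fun t => deg (g t) u < deg (g (t+1)) u) with hGsetdef
        have hGcount : deg (g 0) u + Gset.card ≤ deg (g T) u := by
          have haux : ∀ m, m ≤ T → deg (g 0) u +
              ((Finset.range m).filter (fun t => deg (g t) u < deg (g (t+1)) u)).card
              ≤ deg (g m) u := by
            intro m
            induction m with
            | zero => simp
            | succ m ih =>
              intro hm
              have h1 := ih (by omega)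
              have h2 : deg (g m) u ≤ deg (g (m+1)) u :=
                deg_mono (hstep_le m (by omega)) u
              rw [Finset.range_add_one, Finset.filter_insert]
              by_cases hgain : deg (g m) u < deg (g (m+1)) u
              · rw [if_pos hgain, Finset.card_insert_of_notMem (by simp)]
                omega
              · rw [if_neg hgain]
                omega
          exact haux T le_rfl
        have hGlt : Gset.card < k := by
          have hd0 : δ ≤ deg (g 0) u := by
            have : g 0 = G0 := by
              rw [hgt 0 (by omega)]
              rw [show (⟨0, by omega⟩ : Fin (T+1)) = 0 from Fin.ext rfl]
              exact hE.1
            rw [this]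
            exact minDeg_le_deg G0 u
          have hcast : ((δ:ℝ)) + (Gset.card : ℝ) ≤ (deg (g T) u : ℝ) := by
            have : δ + Gset.card ≤ deg (g T) u := le_trans (by omega) hGcount
            exact_mod_cast this
          have hlt : ((Gset.card : ℝ)) < (δ:ℝ)/4 := by
            have := hE.2.2
            linarith
          have : 4 * Gset.card < δ := by
            have h4 : (4 * Gset.card : ℝ) < (δ : ℝ) := by push_cast; linarith
            exact_mod_cast h4
          omega
        have hblock : ∃ b, b < k ∧ ∀ j, j < L → (b*L + j) ∉ Gset := by
          by_contra hcon
          push_neg at hcon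
          have himg : Finset.range k ⊆ Gset.image (fun t => t / L) := by
            intro b hb
            obtain ⟨j, hjL, hjmem⟩ := hcon b (Finset.mem_range.mp hb)
            refine Finset.mem_image.mpr ⟨b*L + j, hjmem, ?_⟩
            rw [add_comm, mul_comm, Nat.add_mul_div_left j b (by omega : 0 < L),
              Nat.div_eq_of_lt hjL, Nat.zero_add]
          have h1 : k ≤ Gset.card := by
            calc k = (Finset.range k).card := (Finset.card_range k).symm
              _ ≤ (Gset.image (fun t => t / L)).card := Finset.card_le_card himg
              _ ≤ Gset.card := Finset.card_image_le
          omega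
        obtain ⟨b, hbk, hnog⟩ := hblock
        have hcond : s 0 = G0 ∧ (∀ t : Fin T, P b t.val (s t.castSucc) (s t.succ)) := by
          refine ⟨hE.1, fun t => ?_⟩
          intro hin
          have htT : (t : ℕ) < T := t.isLt
          have hsc : s t.castSucc = g t.val := by
            rw [hgt t.val (by omega)]
            exact congrArg s (Fin.ext rfl)
          have hss : s t.succ = g (t.val + 1) := by
            rw [hgt (t.val+1) (by omega)]
            exact congrArg s (Fin.ext rfl)
          refine ⟨⟨?_, ?_⟩, ?_⟩
          · rw [hsc]
            exact hE.2.1 t.val htT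
          · rw [hsc]
            have h1 : deg (g t.val) u ≤ deg (g T) u := hdegmono t.val T (by omega) le_rfl
            have h2 : ((deg (g t.val) u : ℝ)) ≤ (deg (g T) u : ℝ) := by exact_mod_cast h1
            linarith [hE.2.2]
          · rw [hsc, hss]
            have hj := hnog (t.val - b*L) (by omega)
            rw [show b*L + (t.val - b*L) = t.val by omega] at hj
            have : ¬ (deg (g t.val) u < deg (g (t.val + 1)) u) := by
              intro hlt
              exact hj (Finset.mem_filter.mpr ⟨Finset.mem_range.mpr htT, hlt⟩)
            omega
        calc (∏ t : Fin T, triStep (s t.castSucc) (s t.succ))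
            = (if s 0 = G0 ∧ (∀ t : Fin T, P b t.val (s t.castSucc) (s t.succ))
              then ∏ t : Fin T, triStep (s t.castSucc) (s t.succ) else 0) := by
              rw [if_pos hcond]
          _ ≤ ∑ b ∈ Finset.range k,
              (if s 0 = G0 ∧ (∀ t : Fin T, P b t.val (s t.castSucc) (s t.succ))
              then ∏ t : Fin T, triStep (s t.castSucc) (s t.succ) else 0) :=
            Finset.single_le_sum hRHS_nonneg (Finset.mem_range.mpr hbk)
  -- Step B: chain bound for each block
  have hchain : ∀ b ∈ Finset.range k, chainSum b ≤ (ρ ^ k) ^ L := by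
    intro b hb
    have hbk := Finset.mem_range.mp hb
    have hbound : chainSum b ≤ ∏ t ∈ Finset.range T,
        (if b*L ≤ t ∧ t < b*L + L then ρ ^ k else 1) := by
      rw [hchainSumdef]
      dsimp only
      have hstepbound : ∀ t, t < T → ∀ x : SimpleGraph V,
          (∑ y : SimpleGraph V, @ite ℝ (P b t x y) (Classical.propDecidable _) (triStep x y) 0)
          ≤ (fun t => if b*L ≤ t ∧ t < b*L + L then ρ ^ k else 1) t := by
        dsimp only
        intro t ht x
        by_cases hin : b*L ≤ t ∧ t < b*L + L
        · rw [if_pos hin]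
          by_cases hA : A x
          · have hcg : ∀ y : SimpleGraph V,
                (@ite ℝ (P b t x y) (Classical.propDecidable _) (triStep x y) 0)
                = (if deg y u ≤ deg x u then triStep x y else 0) := by
              intro y
              by_cases h : deg y u ≤ deg x u
              · rw [if_pos h, if_pos (show P b t x y from fun _ => ⟨hA, h⟩)]
              · rw [if_neg h, if_neg (show ¬ P b t x y from fun hc => h (hc hin).2)]
            rw [Finset.sum_congr rfl fun y _ => hcg y]
            exact one_round n δ hcard hδ1 hδn x u hA.1 hA.2
          · have hcg : ∀ y : SimpleGraph V,
                (@ite ℝ (P b t x y) (Classical.propDecidable _) (triStep x y) 0) = 0 := by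
              intro y
              exact if_neg (fun h => hA (h hin).1)
            rw [Finset.sum_congr rfl fun y _ => hcg y, Finset.sum_const_zero]
            positivity
        · rw [if_neg hin]
          have hcg : ∀ y : SimpleGraph V,
              (@ite ℝ (P b t x y) (Classical.propDecidable _) (triStep x y) 0) = triStep x y := by
            intro y
            exact if_pos (fun h => absurd h hin)
          rw [Finset.sum_congr rfl fun y _ => hcg y, sum_triStep]
      have hcb := chain_bound triStep (fun x y => triStep_nonneg x y) T (P b)
        (fun t => if b*L ≤ t ∧ t < b*L + L then ρ ^ k else 1)
        (fun t => by split_ifs <;> positivity) hstepbound G0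
      refine le_trans (le_of_eq ?_) hcb
      refine Finset.sum_congr rfl fun s _ => ?_
      congr 1
    have hprodval : (∏ t ∈ Finset.range T,
        (if b*L ≤ t ∧ t < b*L + L then ρ ^ k else 1)) = (ρ ^ k) ^ L := by
      have hsub : b*L + L ≤ T := by
        have h1 : (b+1) * L ≤ k * L := Nat.mul_le_mul_right L (by omega)
        have h2 : b * L + L = (b+1) * L := by ring
        omega
      rw [← Finset.prod_filter_mul_prod_filter_not (Finset.range T)
        (fun t => b*L ≤ t ∧ t < b*L + L)]
      have hIco : (Finset.range T).filter (fun t => b*L ≤ t ∧ t < b*L + L)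
          = Finset.Ico (b*L) (b*L + L) := by
        ext t
        simp only [Finset.mem_filter, Finset.mem_range, Finset.mem_Ico]
        omega
      have hp1 : ∀ t ∈ (Finset.range T).filter (fun t => b*L ≤ t ∧ t < b*L + L),
          (if b*L ≤ t ∧ t < b*L + L then ρ ^ k else 1) = ρ ^ k := by
        intro t ht
        exact if_pos (Finset.mem_filter.mp ht).2
      have hp2 : ∀ t ∈ (Finset.range T).filter (fun t => ¬(b*L ≤ t ∧ t < b*L + L)),
          (if b*L ≤ t ∧ t < b*L + L then ρ ^ k else 1) = 1 := by
        intro t ht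
        exact if_neg (Finset.mem_filter.mp ht).2
      rw [Finset.prod_congr rfl hp1, Finset.prod_congr rfl hp2, Finset.prod_const,
        Finset.prod_const, one_pow, mul_one, hIco, Nat.card_Ico]
      congr 1
      omega
    calc chainSum b ≤ _ := hbound
      _ = (ρ ^ k) ^ L := hprodval
  -- Step C: numerics
  have hfinal : (k : ℝ) * (ρ ^ k) ^ L ≤ 1 / (n:ℝ)^2 := by
    rw [← pow_mul]
    have hexp1 : ρ ≤ Real.exp (-(1 / (9 * (n:ℝ)))) := by
      have := Real.add_one_le_exp (-(1 / (9 * (n:ℝ))))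
      rw [hρdef]; linarith
    have hexp2 : ρ ^ (k * L) ≤ Real.exp (-(1 / (9 * (n:ℝ)))) ^ (k * L) :=
      pow_le_pow_left₀ hρ0 hexp1 _
    have hexp3 : Real.exp (-(1 / (9 * (n:ℝ)))) ^ (k * L)
        = Real.exp (-(((k*L : ℕ) : ℝ) / (9 * n))) := by
      rw [← Real.exp_nat_mul]
      congr 1
      field_simp
    have hklT : (T:ℝ) - (n:ℝ) ≤ ((k*L : ℕ) : ℝ) := by
      have h1 : (T:ℝ) < ((k*L : ℕ):ℝ) + k := by exact_mod_cast hkLlow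
      have h2 : (k:ℝ) ≤ (n:ℝ) := by exact_mod_cast hkn
      linarith
    have hexp4 : Real.exp (-(((k*L : ℕ) : ℝ) / (9 * n))) ≤ Real.exp (-(3 * Real.log n)) := by
      rw [Real.exp_le_exp]
      rw [neg_le_neg_iff]
      rw [le_div_iff₀ (by positivity)]
      have h73 : (1:ℝ) ≤ 73 * Real.log n := by nlinarith
      nlinarith
    have hexp5 : Real.exp (-(3 * Real.log n)) = 1 / (n:ℝ)^3 := by
      rw [Real.exp_neg]
      rw [show (3:ℝ) * Real.log n = ((3:ℕ):ℝ) * Real.log n by norm_num]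
      rw [Real.exp_nat_mul, Real.exp_log hn0]
      norm_num
    have hkR : (k:ℝ) ≤ (n:ℝ) := by exact_mod_cast hkn
    have hchainend : ρ ^ (k * L) ≤ 1 / (n:ℝ)^3 := by
      calc ρ ^ (k*L) ≤ _ := hexp2
        _ = _ := hexp3
        _ ≤ _ := hexp4
        _ = 1 / (n:ℝ)^3 := hexp5
    have hpos : (0:ℝ) ≤ ρ ^ (k*L) := pow_nonneg hρ0 _
    calc (k:ℝ) * ρ ^ (k*L) ≤ (n:ℝ) * (1 / (n:ℝ)^3) := by
          apply mul_le_mul hkR hchainend hpos (by positivity)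
      _ = 1 / (n:ℝ)^2 := by field_simp
  calc trajProb triStep G0 T _ ≤ ∑ b ∈ Finset.range k, chainSum b := hpoint
    _ ≤ ∑ b ∈ Finset.range k, (ρ ^ k) ^ L := Finset.sum_le_sum hchain
    _ = (k : ℝ) * (ρ ^ k) ^ L := by
        rw [Finset.sum_const, Finset.card_range, nsmul_eq_mul]
    _ ≤ 1 / (n:ℝ)^2 := hfinal
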